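/- Let n ≥ 2 and take the ideal observables A^{(j)}_x. Then for every s ∈ {0,1}^n, W_s = Σ_{s'∈{0,1}^n} μ_{s,s'} |ξ_{s'}⟩⟨ξ_{s'}|, where μ_{s,s'} = √2 Σ_{j=2}^n (−1)^{s'_j ⊕ s_j} + √2(n−1)(−1)^{s'_1 ⊕ s_1} (⊕ denoting XOR of bits). Moreover μ_{s,s'} < 2√2(n−1) whenever s' ≠ s; hence the maximal eigenvalue 2√2(n−1) of W_s is nondegenerate, with one-dimensional eigenspace spanned by |ξ_s⟩. -/
import Mathlib


open Matrix Finset ComplexOrder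

noncomputable section

/-- 2×2 complex matrices. -/
abbrev Mat2 := Matrix (Fin 2) (Fin 2) ℂ

/-- The Pauli matrix `σ_X`. -/
def σX : Mat2 := !![0, 1; 1, 0]

/-- The Pauli matrix `σ_Z`. -/
def σZ : Mat2 := !![1, 0; 0, -1]

/-- Tensor product of `n` 2×2 matrices, indexed by bit strings `Fin n → Fin 2`. -/
def tensorN (n : ℕ) (M : Fin n → Mat2) :
    Matrix (Fin n → Fin 2) (Fin n → Fin 2) ℂ :=
  Matrix.of fun f g => ∏ j, M j (f j) (g j)

/-- The operator `W_s` built from the observables `A^{(j)}_x`. -/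
def Wop (n : ℕ) [NeZero n] (A : Fin n → Fin 2 → Mat2) (s : Fin n → Fin 2) :
    Matrix (Fin n → Fin 2) (Fin n → Fin 2) ℂ :=
  (((n : ℂ) - 1) * (-1 : ℂ) ^ ((s 0 : ℕ))) •
      tensorN n (fun j => if j = 0 then A 0 0 + A 0 1 else A j 0)
    + ∑ j ∈ Finset.univ.filter (fun j : Fin n => j ≠ 0),
        ((-1 : ℂ) ^ ((s j : ℕ))) •
          tensorN n (fun k => if k = 0 then A 0 0 - A 0 1
            else if k = j then A j 1 else 1)

/-- The ideal observables. -/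
def Aideal (n : ℕ) [NeZero n] : Fin n → Fin 2 → Mat2 :=
  fun j x =>
    if j = 0 then ((Real.sqrt 2 : ℂ))⁻¹ • (σX + ((-1 : ℂ) ^ ((x : ℕ))) • σZ)
    else if x = 0 then σX else σZ

/-- The GHZ-basis vector `|ξ_s⟩`. -/
def ghz (n : ℕ) [NeZero n] (s : Fin n → Fin 2) : (Fin n → Fin 2) → ℂ :=
  fun f => ((Real.sqrt 2 : ℂ))⁻¹ *
    ((if f = (fun j => if j = 0 then 0 else s j) then 1 else 0)
      + (-1 : ℂ) ^ ((s 0 : ℕ)) *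
        (if f = (fun j => if j = 0 then 1 else 1 - s j) then 1 else 0))

/-- The eigenvalues `μ_{s,s'} = √2 Σ_{j≥2} (−1)^{s'_j ⊕ s_j} + √2(n−1)(−1)^{s'_1 ⊕ s_1}`. -/
def μval (n : ℕ) [NeZero n] (s s' : Fin n → Fin 2) : ℝ :=
  Real.sqrt 2 * (∑ j ∈ Finset.univ.filter (fun j : Fin n => j ≠ 0),
      (-1 : ℝ) ^ (((s' j + s j : Fin 2) : ℕ)))
    + Real.sqrt 2 * ((n : ℝ) - 1) * (-1 : ℝ) ^ (((s' 0 + s 0 : Fin 2) : ℕ))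

set_option linter.unusedSectionVars false
set_option linter.unusedVariables false

-- Fin 2 helpers
lemma fin2_sub_sub (a : Fin 2) : 1 - (1 - a) = a := by fin_cases a <;> rfl

lemma σX_apply (a b : Fin 2) : σX a b = if b = 1 - a then 1 else 0 := by
  fin_cases a <;> fin_cases b <;> norm_num [σX]

lemma σZ_apply (a b : Fin 2) : σZ a b = if b = a then ((-1:ℂ)) ^ ((a:ℕ)) else 0 := by
  fin_cases a <;> fin_cases b <;> norm_num [σZ]

lemma one_apply2 (a b : Fin 2) : (1 : Mat2) a b = if b = a then 1 else 0 := by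
  fin_cases a <;> fin_cases b <;> norm_num [Matrix.one_apply]

lemma negpow_add (a b : Fin 2) :
    ((-1:ℂ) ^ (((a + b : Fin 2)):ℕ)) = (-1:ℂ) ^ ((a:ℕ)) * (-1:ℂ) ^ ((b:ℕ)) := by
  fin_cases a <;> fin_cases b <;> norm_num [show ((2:Fin 2):ℕ) = 0 from rfl, show ((1+1:Fin 2):ℕ) = 0 from rfl]

lemma negpow_sub (a : Fin 2) :
    ((-1:ℂ) ^ (((1 - a : Fin 2)):ℕ)) = -(-1:ℂ) ^ ((a:ℕ)) := by
  fin_cases a <;> norm_num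

lemma negpow_sq (a : Fin 2) : (-1:ℂ) ^ ((a:ℕ)) * (-1:ℂ) ^ ((a:ℕ)) = 1 := by
  fin_cases a <;> norm_num

lemma negpow_ne (a b : Fin 2) (h : a ≠ b) :
    (-1:ℂ) ^ ((a:ℕ)) * (-1:ℂ) ^ ((b:ℕ)) = -1 := by
  fin_cases a <;> fin_cases b <;> simp_all

-- auxiliary defs
variable {n : ℕ} [NeZero n]

def cmpl (f : Fin n → Fin 2) : Fin n → Fin 2 := fun j => 1 - f j

def e0 (s : Fin n → Fin 2) : Fin n → Fin 2 := fun j => if j = 0 then 0 else s j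
def e1 (s : Fin n → Fin 2) : Fin n → Fin 2 := fun j => if j = 0 then 1 else 1 - s j

lemma cmpl_cmpl (f : Fin n → Fin 2) : cmpl (cmpl f) = f :=
  funext fun j => fin2_sub_sub _

lemma cmpl_e0 (s : Fin n → Fin 2) : cmpl (e0 s) = e1 s := by
  funext j; simp only [cmpl, e0, e1]; split <;> rfl

lemma cmpl_e1 (s : Fin n → Fin 2) : cmpl (e1 s) = e0 s := by
  rw [← cmpl_e0, cmpl_cmpl]

lemma e0_ne_e1 (a b : Fin n → Fin 2) : e0 a ≠ e1 b := by
  intro h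
  have := congrFun h 0
  simp [e0, e1] at this

lemma e0_inj_iff (a b : Fin n → Fin 2) :
    e0 a = e0 b ↔ ∀ j, j ≠ 0 → a j = b j := by
  constructor
  · intro h j hj
    have := congrFun h j
    simpa [e0, hj] using this
  · intro h; funext j
    by_cases hj : j = 0 <;> simp [e0, hj]
    exact h j hj

lemma e1_eq_of_e0 (a b : Fin n → Fin 2) (h : e0 a = e0 b) : e1 a = e1 b := by
  rw [← cmpl_e0, ← cmpl_e0, h]

lemma ghz_eq (s : Fin n → Fin 2) (f : Fin n → Fin 2) :
    ghz n s f = ((Real.sqrt 2 : ℂ))⁻¹ *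
      ((if f = e0 s then 1 else 0)
        + (-1 : ℂ) ^ ((s 0 : ℕ)) * (if f = e1 s then 1 else 0)) := rfl

lemma sqrt2C_mul_self : ((Real.sqrt 2 : ℝ) : ℂ) * ((Real.sqrt 2 : ℝ) : ℂ) = 2 := by
  have : Real.sqrt 2 * Real.sqrt 2 = 2 := Real.mul_self_sqrt (by norm_num)
  norm_cast

lemma sqrt2C_ne : ((Real.sqrt 2 : ℝ) : ℂ) ≠ 0 := by
  simp [Real.sqrt_eq_zero']

lemma sqrt2C_inv : (((Real.sqrt 2 : ℝ) : ℂ))⁻¹ = ((Real.sqrt 2 : ℝ) : ℂ) / 2 := by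
  have h2 := sqrt2C_mul_self
  have hne := sqrt2C_ne
  field_simp
  linear_combination (-1:ℂ) * h2

lemma Aideal_sum : Aideal n 0 0 + Aideal n 0 1 = (((Real.sqrt 2 : ℝ) : ℂ)) • σX := by
  ext i j
  simp only [Aideal, if_pos rfl, Matrix.add_apply, Matrix.smul_apply, smul_eq_mul]
  fin_cases i <;> fin_cases j <;> simp [σX, σZ, sqrt2C_inv] <;> ring

lemma Aideal_diff : Aideal n 0 0 - Aideal n 0 1 = (((Real.sqrt 2 : ℝ) : ℂ)) • σZ := by
  ext i j
  simp only [Aideal, if_pos rfl, Matrix.sub_apply, Matrix.smul_apply, smul_eq_mul]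
  fin_cases i <;> fin_cases j <;> simp [σX, σZ, sqrt2C_inv] <;> ring

lemma σX_eval (a b : Fin 2) (h : b ≠ 1 - a) : σX a b = 0 := by
  rw [σX_apply, if_neg h]

lemma prod_σX (f g : Fin n → Fin 2) :
    ∏ j, σX (f j) (g j) = if g = cmpl f then 1 else 0 := by
  by_cases h : g = cmpl f
  · subst h
    rw [if_pos rfl]
    apply Finset.prod_eq_one
    intro j _
    have : ∀ a : Fin 2, σX a (1 - a) = 1 := by intro a; fin_cases a <;> norm_num [σX]
    exact this (f j)
  · rw [if_neg h]
    obtain ⟨j, hj⟩ : ∃ j, g j ≠ 1 - f j := by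
      by_contra hc
      push_neg at hc
      exact h (funext hc)
    exact Finset.prod_eq_zero (Finset.mem_univ j) (σX_eval _ _ hj)

lemma tensor1_eval (f g : Fin n → Fin 2) :
    tensorN n (fun j => if j = 0 then Aideal n 0 0 + Aideal n 0 1 else Aideal n j 0) f g
      = ((Real.sqrt 2 : ℝ) : ℂ) * (if g = cmpl f then 1 else 0) := by
  have hstep : ∀ j : Fin n,
      (if j = 0 then Aideal n 0 0 + Aideal n 0 1 else Aideal n j 0) (f j) (g j)
        = (if j = 0 then ((Real.sqrt 2 : ℝ) : ℂ) else 1) * σX (f j) (g j) := by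
    intro j
    by_cases hj : j = 0
    · subst hj
      simp only [if_pos rfl, ← Matrix.add_apply, Aideal_sum, Matrix.smul_apply, smul_eq_mul,
        if_true, eq_self_iff_true]
    · simp [hj, Aideal]
  simp only [tensorN, Matrix.of_apply]
  rw [Finset.prod_congr rfl (fun j _ => hstep j), Finset.prod_mul_distrib, prod_σX]
  congr 1
  simp

lemma σZ_eval_ne (a b : Fin 2) (h : b ≠ a) : σZ a b = 0 := by rw [σZ_apply, if_neg h]
lemma σZ_eval_eq (a : Fin 2) : σZ a a = (-1:ℂ)^((a:ℕ)) := by rw [σZ_apply, if_pos rfl]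

lemma Aideal_snd (j : Fin n) (hj : j ≠ 0) : Aideal n j 1 = σZ := by
  simp [Aideal, hj]

lemma tensor2_eval (j : Fin n) (hj : j ≠ 0) (f g : Fin n → Fin 2) :
    tensorN n (fun k => if k = 0 then Aideal n 0 0 - Aideal n 0 1
        else if k = j then Aideal n j 1 else 1) f g
      = ((Real.sqrt 2 : ℝ) : ℂ) *
          (if g = f then (-1:ℂ) ^ ((f 0 : ℕ)) * (-1:ℂ) ^ ((f j : ℕ)) else 0) := by
  simp only [tensorN, Matrix.of_apply]
  by_cases h : g = f
  · subst h
    rw [if_pos rfl]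
    have hstep : ∀ k : Fin n,
        (if k = 0 then Aideal n 0 0 - Aideal n 0 1
          else if k = j then Aideal n j 1 else 1) (g k) (g k)
        = (if k = 0 then ((Real.sqrt 2:ℝ):ℂ) * (-1:ℂ)^((g 0 : ℕ)) else 1) *
          (if k = j then (-1:ℂ)^((g j : ℕ)) else 1) := by
      intro k
      by_cases hk0 : k = 0
      · subst hk0
        rw [if_pos rfl, if_pos rfl, if_neg (Ne.symm hj), Aideal_diff]
        simp [σZ_eval_eq, Matrix.smul_apply]
      · by_cases hkj : k = j
        · subst hkj
          rw [if_neg hk0, if_neg hk0, if_pos rfl, if_pos rfl, Aideal_snd k hk0,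
            σZ_eval_eq, one_mul]
        · simp [hk0, hkj, Matrix.one_apply]
    rw [Finset.prod_congr rfl (fun k _ => hstep k), Finset.prod_mul_distrib]
    simp [Finset.prod_ite_eq']
    ring
  · rw [if_neg h, mul_zero]
    obtain ⟨k, hk⟩ : ∃ k, g k ≠ f k := by
      by_contra hc; push_neg at hc; exact h (funext hc)
    apply Finset.prod_eq_zero (Finset.mem_univ k)
    by_cases hk0 : k = 0
    · subst hk0
      rw [if_pos rfl, Aideal_diff]
      simp [σZ_eval_ne _ _ hk, Matrix.smul_apply]
    · by_cases hkj : k = j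
      · subst hkj
        rw [if_neg hk0, if_pos rfl, Aideal_snd k hk0, σZ_eval_ne _ _ hk]
      · rw [if_neg hk0, if_neg hkj, Matrix.one_apply, if_neg (Ne.symm hk)]

lemma cmpl_ne (f : Fin n → Fin 2) : cmpl f ≠ f := by
  intro h
  have h2 : (1 : Fin 2) - f 0 = f 0 := congrFun h 0
  have : ∀ a : Fin 2, 1 - a ≠ a := by decide
  exact this _ h2

lemma Wop_apply (s : Fin n → Fin 2) (f g : Fin n → Fin 2) :
    Wop n (Aideal n) s f g
      = (((n:ℂ)-1) * (-1:ℂ)^((s 0:ℕ)) * ((Real.sqrt 2:ℝ):ℂ)) * (if g = cmpl f then 1 else 0)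
        + (((Real.sqrt 2:ℝ):ℂ) * (-1:ℂ)^((f 0:ℕ)) *
            ∑ j ∈ Finset.univ.filter (fun j : Fin n => j ≠ 0),
              (-1:ℂ)^((s j:ℕ)) * (-1:ℂ)^((f j:ℕ))) * (if g = f then 1 else 0) := by
  simp only [Wop, Matrix.add_apply, Matrix.smul_apply, Matrix.sum_apply, smul_eq_mul,
    tensor1_eval]
  rw [Finset.sum_congr rfl (fun j hj => by
    rw [tensor2_eval j (by simpa using (Finset.mem_filter.mp hj).2) f g])]
  by_cases h : g = f
  · have h2 : ¬ g = cmpl f := fun hc => cmpl_ne f (hc.symm.trans h)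
    subst h
    simp only [eq_self_iff_true, if_true, if_neg h2, mul_zero, mul_one, zero_add, add_zero]
    rw [Finset.mul_sum]
    exact Finset.sum_congr rfl fun j _ => by ring
  · by_cases h2 : g = cmpl f
    · simp only [if_pos h2, if_neg h, mul_zero, mul_one, add_zero]
      simp
    · simp only [if_neg h, if_neg h2, mul_zero, add_zero, mul_zero]
      simp

lemma Wop_mulVec (s : Fin n → Fin 2) (v : (Fin n → Fin 2) → ℂ) (f : Fin n → Fin 2) :
    (Wop n (Aideal n) s).mulVec v f
      = (((n:ℂ)-1) * (-1:ℂ)^((s 0:ℕ)) * ((Real.sqrt 2:ℝ):ℂ)) * v (cmpl f)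
        + (((Real.sqrt 2:ℝ):ℂ) * (-1:ℂ)^((f 0:ℕ)) *
            ∑ j ∈ Finset.univ.filter (fun j : Fin n => j ≠ 0),
              (-1:ℂ)^((s j:ℕ)) * (-1:ℂ)^((f j:ℕ))) * v f := by
  simp only [Matrix.mulVec, dotProduct, Wop_apply, add_mul]
  rw [Finset.sum_add_distrib]
  congr 1 <;>
    simp [ite_mul, mul_ite, mul_zero, zero_mul, mul_one, Finset.sum_ite_eq', Finset.mem_univ]

lemma μval_C (s s' : Fin n → Fin 2) :
    ((μval n s s' : ℝ) : ℂ)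
      = ((Real.sqrt 2:ℝ):ℂ) * (∑ j ∈ Finset.univ.filter (fun j : Fin n => j ≠ 0),
            (-1:ℂ)^((s' j:ℕ)) * (-1:ℂ)^((s j:ℕ)))
        + ((Real.sqrt 2:ℝ):ℂ) * ((n:ℂ)-1) * ((-1:ℂ)^((s' 0:ℕ)) * (-1:ℂ)^((s 0:ℕ))) := by
  unfold μval
  push_cast
  simp [negpow_add]

lemma eig (s s' : Fin n → Fin 2) (f : Fin n → Fin 2) :
    (Wop n (Aideal n) s).mulVec (ghz n s') f = ((μval n s s' : ℝ):ℂ) * ghz n s' f := by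
  rw [Wop_mulVec, μval_C]
  by_cases h0 : f = e0 s'
  · subst h0
    rw [cmpl_e0, ghz_eq, ghz_eq, if_neg (Ne.symm (e0_ne_e1 s' s')), if_pos rfl,
      if_pos rfl, if_neg (e0_ne_e1 s' s')]
    have hf0 : ((e0 s' 0 : Fin 2) : ℕ) = 0 := rfl
    have hsum : (∑ j ∈ Finset.univ.filter (fun j : Fin n => j ≠ 0),
          (-1:ℂ)^((s j:ℕ)) * (-1:ℂ)^((e0 s' j:ℕ)))
        = ∑ j ∈ Finset.univ.filter (fun j : Fin n => j ≠ 0),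
          (-1:ℂ)^((s' j:ℕ)) * (-1:ℂ)^((s j:ℕ)) := by
      refine Finset.sum_congr rfl fun j hj => ?_
      have hjne : j ≠ 0 := by simpa using (Finset.mem_filter.mp hj).2
      have he : e0 s' j = s' j := by simp [e0, hjne]
      rw [he]; ring
    rw [hf0, hsum, sqrt2C_inv]
    ring
  · by_cases h1 : f = e1 s'
    · subst h1
      rw [cmpl_e1, ghz_eq, ghz_eq, if_pos rfl, if_neg (e0_ne_e1 s' s'),
        if_neg (Ne.symm (e0_ne_e1 s' s')), if_pos rfl]
      have hf0 : ((e1 s' 0 : Fin 2) : ℕ) = 1 := rfl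
      have hsum : (∑ j ∈ Finset.univ.filter (fun j : Fin n => j ≠ 0),
            (-1:ℂ)^((s j:ℕ)) * (-1:ℂ)^((e1 s' j:ℕ)))
          = -∑ j ∈ Finset.univ.filter (fun j : Fin n => j ≠ 0),
            (-1:ℂ)^((s' j:ℕ)) * (-1:ℂ)^((s j:ℕ)) := by
        rw [← Finset.sum_neg_distrib]
        refine Finset.sum_congr rfl fun j hj => ?_
        have hjne : j ≠ 0 := by simpa using (Finset.mem_filter.mp hj).2
        have he : e1 s' j = 1 - s' j := by simp [e1, hjne]
        rw [he, negpow_sub]; ring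
      rw [hf0, hsum, sqrt2C_inv]
      have hQ := negpow_sq (s' 0)
      linear_combination (-(((n:ℂ)-1) * (-1:ℂ)^((s 0:ℕ)) * ((Real.sqrt 2:ℝ):ℂ)
        * ((Real.sqrt 2:ℝ):ℂ) / 2)) * hQ
    · have hc0 : cmpl f ≠ e0 s' := by
        intro hc
        apply h1
        rw [← cmpl_cmpl f, hc, cmpl_e0]
      have hc1 : cmpl f ≠ e1 s' := by
        intro hc
        apply h0
        rw [← cmpl_cmpl f, hc, cmpl_e1]
      rw [ghz_eq, ghz_eq, if_neg h0, if_neg h1, if_neg hc0, if_neg hc1]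
      ring

lemma ghz_conj (a : Fin n → Fin 2) (g : Fin n → Fin 2) :
    (starRingEnd ℂ) (ghz n a g) = ghz n a g := by
  rw [ghz_eq]
  simp [_root_.map_mul, map_add, map_inv₀, Complex.conj_ofReal, map_pow,
    apply_ite (starRingEnd ℂ)]

lemma sum_ind_ind (c d : Fin n → Fin 2) :
    ∑ g : Fin n → Fin 2, (if g = c then (1:ℂ) else 0) * (if g = d then 1 else 0)
      = if c = d then 1 else 0 := by
  rw [Finset.sum_eq_single c]
  · simp
  · intro g _ hg; rw [if_neg hg, zero_mul]
  · intro h; exact absurd (Finset.mem_univ c) h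

lemma ghz_dot (a b : Fin n → Fin 2) :
    ∑ g : Fin n → Fin 2, (starRingEnd ℂ) (ghz n a g) * ghz n b g
      = if a = b then 1 else 0 := by
  have expand : ∀ g, (starRingEnd ℂ) (ghz n a g) * ghz n b g =
      ((Real.sqrt 2:ℝ):ℂ)⁻¹ * ((Real.sqrt 2:ℝ):ℂ)⁻¹ *
        ((if g = e0 a then (1:ℂ) else 0) * (if g = e0 b then 1 else 0))
      + ((Real.sqrt 2:ℝ):ℂ)⁻¹ * ((Real.sqrt 2:ℝ):ℂ)⁻¹ * (-1:ℂ)^((b 0:ℕ)) *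
        ((if g = e0 a then (1:ℂ) else 0) * (if g = e1 b then 1 else 0))
      + ((Real.sqrt 2:ℝ):ℂ)⁻¹ * ((Real.sqrt 2:ℝ):ℂ)⁻¹ * (-1:ℂ)^((a 0:ℕ)) *
        ((if g = e1 a then (1:ℂ) else 0) * (if g = e0 b then 1 else 0))
      + ((Real.sqrt 2:ℝ):ℂ)⁻¹ * ((Real.sqrt 2:ℝ):ℂ)⁻¹ * ((-1:ℂ)^((a 0:ℕ)) * (-1:ℂ)^((b 0:ℕ))) *
        ((if g = e1 a then (1:ℂ) else 0) * (if g = e1 b then 1 else 0)) := by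
    intro g
    rw [ghz_conj, ghz_eq, ghz_eq]
    ring
  rw [Finset.sum_congr rfl fun g _ => expand g]
  rw [Finset.sum_add_distrib, Finset.sum_add_distrib, Finset.sum_add_distrib,
    ← Finset.mul_sum, ← Finset.mul_sum, ← Finset.mul_sum, ← Finset.mul_sum,
    sum_ind_ind, sum_ind_ind, sum_ind_ind, sum_ind_ind]
  have hone : ¬ (e1 a = e0 b) := fun h => e0_ne_e1 b a h.symm
  rw [if_neg (e0_ne_e1 a b), if_neg hone]
  by_cases hab : a = b
  · subst hab
    rw [if_pos rfl, if_pos rfl, if_pos rfl, sqrt2C_inv]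
    have hQ := negpow_sq (a 0)
    have h2 := sqrt2C_mul_self
    field_simp
    linear_combination (1 + (-1:ℂ)^((a 0:ℕ)) * (-1:ℂ)^((a 0:ℕ))) * h2 + 2 * hQ
  · rw [if_neg hab]
    by_cases ht : e0 a = e0 b
    · have he1 : e1 a = e1 b := e1_eq_of_e0 a b ht
      have hhead : a 0 ≠ b 0 := by
        intro hh
        apply hab
        funext j
        by_cases hj : j = 0
        · subst hj; exact hh
        · exact (e0_inj_iff a b).mp ht j hj
      rw [if_pos ht, if_pos he1]
      have hPQ := negpow_ne _ _ hhead
      rw [hPQ]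
      ring
    · have he1 : ¬ e1 a = e1 b := by
        intro hc
        apply ht
        rw [← cmpl_e1, ← cmpl_e1, hc]
      rw [if_neg ht, if_neg he1]
      ring

def Umat (n : ℕ) [NeZero n] : Matrix (Fin n → Fin 2) (Fin n → Fin 2) ℂ :=
  Matrix.of fun f t => ghz n t f

def Dmat (n : ℕ) [NeZero n] (s : Fin n → Fin 2) : Matrix (Fin n → Fin 2) (Fin n → Fin 2) ℂ :=
  Matrix.diagonal (fun t => ((μval n s t : ℝ) : ℂ))

lemma U_conj_mul : (Umat n)ᴴ * Umat n = 1 := by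
  ext a b
  rw [Matrix.mul_apply, Matrix.one_apply]
  have : ∀ g, (Umat n)ᴴ a g * Umat n g b
      = (starRingEnd ℂ) (ghz n a g) * ghz n b g := by
    intro g
    rw [Matrix.conjTranspose_apply]
    rfl
  rw [Finset.sum_congr rfl fun g _ => this g, ghz_dot]

lemma U_mul_conj : Umat n * (Umat n)ᴴ = 1 :=
  mul_eq_one_comm.mp U_conj_mul

lemma WU (s : Fin n → Fin 2) :
    Wop n (Aideal n) s * Umat n = Umat n * Dmat n s := by
  ext f t
  have h1 : (Wop n (Aideal n) s * Umat n) f t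
      = (Wop n (Aideal n) s).mulVec (ghz n t) f := by
    rw [Matrix.mul_apply]; rfl
  rw [h1, eig, Dmat, Matrix.mul_diagonal]
  simp only [Umat, Matrix.of_apply]
  ring

lemma W_diag (s : Fin n → Fin 2) :
    Wop n (Aideal n) s = Umat n * Dmat n s * (Umat n)ᴴ := by
  calc Wop n (Aideal n) s = Wop n (Aideal n) s * (Umat n * (Umat n)ᴴ) := by
        rw [U_mul_conj, Matrix.mul_one]
    _ = (Wop n (Aideal n) s * Umat n) * (Umat n)ᴴ := by rw [Matrix.mul_assoc]
    _ = Umat n * Dmat n s * (Umat n)ᴴ := by rw [WU]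

lemma part1 (s : Fin n → Fin 2) :
    Wop n (Aideal n) s
      = ∑ s' : Fin n → Fin 2, ((μval n s s' : ℝ) : ℂ) •
          vecMulVec (ghz n s') (star (ghz n s')) := by
  rw [W_diag]
  ext f g
  rw [Matrix.sum_apply, Matrix.mul_apply]
  refine Finset.sum_congr rfl fun t _ => ?_
  rw [Dmat, Matrix.mul_diagonal, Matrix.smul_apply, Matrix.vecMulVec_apply]
  simp only [Umat, Matrix.of_apply, Matrix.conjTranspose_apply, smul_eq_mul,
    Pi.star_apply]
  ring

lemma fin2_add_self (a : Fin 2) : a + a = 0 := by fin_cases a <;> rfl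
lemma fin2_add_ne (a b : Fin 2) (h : a ≠ b) : a + b = 1 := by
  fin_cases a <;> fin_cases b <;> simp_all <;> rfl

lemma filter_card : (Finset.univ.filter (fun j : Fin n => j ≠ 0)).card = n - 1 := by
  rw [Finset.filter_ne', Finset.card_erase_of_mem (Finset.mem_univ 0)]
  simp

lemma part2 (hn : 2 ≤ n) (s s' : Fin n → Fin 2) (hne : s' ≠ s) :
    μval n s s' < 2 * Real.sqrt 2 * ((n : ℝ) - 1) := by
  have hs2 : (0:ℝ) < Real.sqrt 2 := Real.sqrt_pos.mpr (by norm_num)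
  have hn1 : (1:ℝ) ≤ (n:ℝ) - 1 := by
    have : (2:ℝ) ≤ (n:ℝ) := by exact_mod_cast hn
    linarith
  have hcard : ((Finset.univ.filter (fun j : Fin n => j ≠ 0)).card : ℝ) = (n:ℝ) - 1 := by
    rw [filter_card, Nat.cast_sub (by omega)]
    simp
  have hterm : ∀ a : Fin 2, (-1:ℝ) ^ ((a:ℕ)) ≤ 1 := by
    intro a; fin_cases a <;> norm_num
  unfold μval
  by_cases h0 : s' 0 = s 0
  · -- head equal: ε = 1, but some tail term is -1
    obtain ⟨j, hj⟩ : ∃ j, s' j ≠ s j := Function.ne_iff.mp hne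
    have hj0 : j ≠ 0 := by
      intro h; exact hj (h ▸ h0)
    have hεv : (((s' 0 + s 0 : Fin 2)) : ℕ) = 0 := by
      rw [h0, fin2_add_self]; rfl
    rw [hεv]
    have hT : (∑ j ∈ Finset.univ.filter (fun j : Fin n => j ≠ 0),
        (-1:ℝ) ^ (((s' j + s j : Fin 2)) : ℕ)) < (n:ℝ) - 1 := by
      have hmem : j ∈ Finset.univ.filter (fun j : Fin n => j ≠ 0) :=
        Finset.mem_filter.mpr ⟨Finset.mem_univ j, hj0⟩
      have hlt : (-1:ℝ) ^ (((s' j + s j : Fin 2)) : ℕ) < 1 := by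
        rw [fin2_add_ne _ _ hj]; norm_num
      have := Finset.sum_lt_sum (f := fun j : Fin n => (-1:ℝ) ^ (((s' j + s j : Fin 2)) : ℕ))
        (g := fun _ : Fin n => (1:ℝ))
        (fun i _ => hterm _) ⟨j, hmem, hlt⟩
      calc _ < ∑ _j ∈ Finset.univ.filter (fun j : Fin n => j ≠ 0), (1:ℝ) := this
        _ = (n:ℝ) - 1 := by rw [Finset.sum_const, nsmul_eq_mul, mul_one, hcard]
    calc Real.sqrt 2 * _ + Real.sqrt 2 * ((n:ℝ)-1) * (-1:ℝ)^(0:ℕ)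
        < Real.sqrt 2 * ((n:ℝ)-1) + Real.sqrt 2 * ((n:ℝ)-1) * 1 := by
          rw [pow_zero, mul_one]
          have := mul_lt_mul_of_pos_left hT hs2
          linarith
      _ = 2 * Real.sqrt 2 * ((n:ℝ)-1) := by ring
  · have hεv : (((s' 0 + s 0 : Fin 2)) : ℕ) = 1 := by
      rw [fin2_add_ne _ _ h0]; rfl
    rw [hεv]
    have hT : (∑ j ∈ Finset.univ.filter (fun j : Fin n => j ≠ 0),
        (-1:ℝ) ^ (((s' j + s j : Fin 2)) : ℕ)) ≤ (n:ℝ) - 1 := by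
      calc _ ≤ ∑ _j ∈ Finset.univ.filter (fun j : Fin n => j ≠ 0), (1:ℝ) :=
            Finset.sum_le_sum (fun i _ => hterm _)
        _ = (n:ℝ) - 1 := by rw [Finset.sum_const, nsmul_eq_mul, mul_one, hcard]
    have h1 : Real.sqrt 2 * ((n:ℝ)-1) * (-1:ℝ)^(1:ℕ) = -(Real.sqrt 2 * ((n:ℝ)-1)) := by ring
    rw [h1]
    have h2 : Real.sqrt 2 * (∑ j ∈ Finset.univ.filter (fun j : Fin n => j ≠ 0),
        (-1:ℝ) ^ (((s' j + s j : Fin 2)) : ℕ)) ≤ Real.sqrt 2 * ((n:ℝ)-1) :=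
      mul_le_mul_of_nonneg_left hT (le_of_lt hs2)
    nlinarith

set_option maxHeartbeats 1000000 in
lemma part3 (hn : 2 ≤ n) (s : Fin n → Fin 2) (v : (Fin n → Fin 2) → ℂ)
    (hv : (Wop n (Aideal n) s).mulVec v
      = ((2 * Real.sqrt 2 * ((n : ℝ) - 1) : ℝ) : ℂ) • v) :
    ∃ c : ℂ, v = c • ghz n s := by
  set lam : ℂ := ((2 * Real.sqrt 2 * ((n : ℝ) - 1) : ℝ) : ℂ) with hlam
  set w : (Fin n → Fin 2) → ℂ := (Umat n)ᴴ.mulVec v with hw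
  have hDw : (Dmat n s).mulVec w = lam • w := by
    have hM : (Umat n)ᴴ * (Umat n * Dmat n s * (Umat n)ᴴ) = Dmat n s * (Umat n)ᴴ := by
      rw [Matrix.mul_assoc (Umat n) (Dmat n s), ← Matrix.mul_assoc, U_conj_mul,
        Matrix.one_mul]
    have h1 : (Umat n)ᴴ.mulVec ((Wop n (Aideal n) s).mulVec v)
        = (Dmat n s).mulVec w := by
      rw [Matrix.mulVec_mulVec, W_diag, hM, hw, ← Matrix.mulVec_mulVec]
    rw [hv] at h1
    rw [← h1, Matrix.mulVec_smul]
  have hwz : ∀ t, t ≠ s → w t = 0 := by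
    intro t ht
    have h2 : ((μval n s t : ℝ) : ℂ) * w t = lam * w t := by
      have := congrFun hDw t
      rw [Dmat, Matrix.mulVec_diagonal] at this
      exact this
    by_contra hz
    have : ((μval n s t : ℝ) : ℂ) = lam := mul_right_cancel₀ hz h2
    rw [hlam] at this
    have hru : (μval n s t : ℝ) = 2 * Real.sqrt 2 * ((n : ℝ) - 1) :=
      Complex.ofReal_inj.mp this
    exact absurd hru (ne_of_lt (part2 hn s t ht))
  refine ⟨w s, ?_⟩
  have hv2 : v = (Umat n).mulVec w := by
    rw [hw, Matrix.mulVec_mulVec, U_mul_conj, Matrix.one_mulVec]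
  funext f
  rw [hv2]
  show ∑ t, Umat n f t * w t = (w s • ghz n s) f
  rw [Finset.sum_eq_single s]
  · simp only [Umat, Matrix.of_apply, Pi.smul_apply, smul_eq_mul]; ring
  · intro t _ ht; rw [hwz t ht, mul_zero]
  · intro h; exact absurd (Finset.mem_univ s) h

/-- for the ideal observables, `W_s` has the spectral decomposition
`W_s = Σ_{s'} μ_{s,s'} |ξ_{s'}⟩⟨ξ_{s'}|`, with `μ_{s,s'} < 2√2(n−1)` for `s' ≠ s`;
hence the maximal eigenvalue `2√2(n−1)` is nondegenerate with eigenspace spanned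
by `|ξ_s⟩`. -/
theorem stmt10 (n : ℕ) [NeZero n] (hn : 2 ≤ n) (s : Fin n → Fin 2) :
    (Wop n (Aideal n) s
        = ∑ s' : Fin n → Fin 2, ((μval n s s' : ℝ) : ℂ) •
            vecMulVec (ghz n s') (star (ghz n s')))
    ∧ (∀ s' : Fin n → Fin 2, s' ≠ s →
        μval n s s' < 2 * Real.sqrt 2 * ((n : ℝ) - 1))
    ∧ (∀ v : (Fin n → Fin 2) → ℂ,
        (Wop n (Aideal n) s).mulVec v
          = ((2 * Real.sqrt 2 * ((n : ℝ) - 1) : ℝ) : ℂ) • v →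
        ∃ c : ℂ, v = c • ghz n s) :=
  ⟨part1 s, fun s' h => part2 hn s s' h, fun v hv => part3 hn s v hv⟩
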